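/- For a totally bounded pseudometric d on a set X and for each n ∈ ℕ, the pseudometric hm(d)(f,g) = ∫₀¹ d(f(t),g(t)) dt is totally bounded on HMₙ(X), the set of step functions [0,1) → X with at most n pieces. -/

import Mathlib

open MeasureTheory

def IsPseudometric {X : Type*} (d : X → X → ℝ) : Prop :=
  (∀ x, d x x = 0) ∧ (∀ x y, 0 ≤ d x y) ∧ (∀ x y, d x y = d y x) ∧
    (∀ x y z, d x z ≤ d x y + d y z)

/-- Step functions on `[0,1)` with at most `n` pieces. -/
def IsStepN {X : Type*} (n : ℕ) (f : ℝ → X) : Prop :=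
  ∃ a : ℕ → ℝ, a 0 = 0 ∧ a n = 1 ∧ (∀ i < n, a i ≤ a (i + 1)) ∧
    ∀ i < n, ∀ t ∈ Set.Ico (a i) (a (i + 1)), f t = f (a i)

noncomputable def hm {X : Type*} (d : X → X → ℝ) (f g : ℝ → X) : ℝ :=
  ∫ t in Set.Ico (0 : ℝ) 1, d (f t) (g t)

private lemma mono_le_aux {a : ℕ → ℝ} {n : ℕ} (h : ∀ i < n, a i ≤ a (i + 1)) :
    ∀ i j, i ≤ j → j ≤ n → a i ≤ a j := by
  intro i j hij hjn
  induction j with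
  | zero => simp [Nat.le_zero.mp hij]
  | succ k ih =>
    rcases Nat.lt_or_ge i (k + 1) with h1 | h1
    · exact le_trans (ih (Nat.lt_succ_iff.mp h1) (le_trans (Nat.le_succ k) hjn))
        (h k (Nat.lt_of_succ_le hjn))
    · have : i = k + 1 := le_antisymm hij h1
      simp [this]

noncomputable def stepFun {X : Type*} (n : ℕ) (b : ℕ → ℝ) (c : ℕ → X) : ℝ → X :=
  fun t => c (Nat.findGreatest (fun i => b i ≤ t) (n - 1))

lemma stepFun_eq {X : Type*} {n : ℕ} {b : ℕ → ℝ} (c : ℕ → X)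
    (hmono : ∀ i < n, b i ≤ b (i + 1)) {i : ℕ} (hi : i < n) {t : ℝ}
    (h1 : b i ≤ t) (h2 : t < b (i + 1)) :
    stepFun n b c t = c i := by
  have hin : i ≤ n - 1 := Nat.le_pred_of_lt hi
  have hP : b (Nat.findGreatest (fun j => b j ≤ t) (n - 1)) ≤ t :=
    Nat.findGreatest_spec (P := fun j => b j ≤ t) hin h1
  have hge : i ≤ Nat.findGreatest (fun j => b j ≤ t) (n - 1) :=
    Nat.le_findGreatest hin h1
  have hle : Nat.findGreatest (fun j => b j ≤ t) (n - 1) ≤ i := by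
    by_contra hc
    push_neg at hc
    have hj : b (i + 1) ≤ b (Nat.findGreatest (fun j => b j ≤ t) (n - 1)) :=
      mono_le_aux hmono (i + 1) _ hc
        (le_trans (Nat.findGreatest_le _) (Nat.pred_le n))
    exact absurd (le_trans hj hP) (not_le.mpr h2)
  show c (Nat.findGreatest (fun j => b j ≤ t) (n - 1)) = c i
  rw [le_antisymm hle hge]

lemma isStepN_stepFun {X : Type*} {n : ℕ} {b : ℕ → ℝ} (c : ℕ → X)
    (h0 : b 0 = 0) (h1 : b n = 1) (hmono : ∀ i < n, b i ≤ b (i + 1)) :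
    IsStepN n (stepFun n b c) := by
  refine ⟨b, h0, h1, hmono, ?_⟩
  intro i hi t ht
  rw [stepFun_eq c hmono hi ht.1 ht.2,
    stepFun_eq c hmono hi (le_refl _) (lt_of_le_of_lt ht.1 ht.2)]

theorem hm_totallyBounded_on_HMn {X : Type*} (d : X → X → ℝ)
    (hd : IsPseudometric d)
    (htb : ∀ ε > (0 : ℝ), ∃ s : Finset X, ∀ x : X, ∃ c ∈ s, d x c < ε)
    (n : ℕ) :
    ∀ ε > (0 : ℝ), ∃ s : Finset (ℝ → X), (∀ f ∈ s, IsStepN n f) ∧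
      ∀ f : ℝ → X, IsStepN n f → ∃ g ∈ s, hm d f g < ε := by
  classical
  intro ε hε
  rcases Nat.eq_zero_or_pos n with hn0 | hn
  · refine ⟨∅, by simp, ?_⟩
    intro f hf
    obtain ⟨a, ha0, ha1, -, -⟩ := hf
    rw [hn0, ha0] at ha1
    norm_num at ha1
  by_cases hX : Nonempty X
  swap
  · refine ⟨∅, by simp, ?_⟩
    intro f _
    exact absurd ⟨f 0⟩ hX
  obtain ⟨x₀⟩ := hX
  obtain ⟨d0, dpos, dsymm, dtri⟩ := hd
  -- a uniform bound M on d
  obtain ⟨s₁, hs₁⟩ := htb 1 one_pos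
  have hs₁ne : s₁.Nonempty := by
    obtain ⟨c, hc, -⟩ := hs₁ x₀; exact ⟨c, hc⟩
  set M : ℝ := ((s₁ ×ˢ s₁).sup' (hs₁ne.product hs₁ne) fun p => d p.1 p.2) + 2 with hM
  have hdM : ∀ x y, d x y ≤ M := by
    intro x y
    obtain ⟨cx, hcx, hdx⟩ := hs₁ x
    obtain ⟨cy, hcy, hdy⟩ := hs₁ y
    have h1 : d cx cy ≤ (s₁ ×ˢ s₁).sup' (hs₁ne.product hs₁ne) fun p => d p.1 p.2 :=
      Finset.le_sup' (f := fun p : X × X => d p.1 p.2) (b := (cx, cy))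
        (Finset.mem_product.mpr ⟨hcx, hcy⟩)
    have t1 : d x y ≤ d x cx + d cx y := dtri x cx y
    have t2 : d cx y ≤ d cx cy + d cy y := dtri cx cy y
    have t3 : d cy y = d y cy := dsymm cy y
    linarith [hdx, hdy]
  have hM0 : (0 : ℝ) ≤ M := le_trans (dpos x₀ x₀) (hdM x₀ x₀)
  -- parameters
  set ε' : ℝ := ε / 2 with hε'
  obtain ⟨sX, hsX⟩ := htb ε' (half_pos hε)
  set m : ℕ := ⌈2 * M * n / ε⌉₊ + 1 with hm_def
  have hmposn : 0 < m := Nat.succ_pos _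
  have hmpos : (0 : ℝ) < m := by exact_mod_cast hmposn
  have hmR : 2 * M * n / ε < m := by
    calc 2 * M * n / ε ≤ (⌈2 * M * n / ε⌉₊ : ℝ) := Nat.le_ceil _
      _ < m := by rw [hm_def]; push_cast; linarith
  have hkey : (n : ℝ) * (1 / m) * M < ε / 2 := by
    rw [div_lt_iff₀ hε] at hmR
    have heq : (n : ℝ) * (1 / m) * M = (2 * M * n) / 2 / m := by ring
    rw [heq, div_div, div_lt_iff₀ (by positivity)]
    nlinarith
  -- the candidate finite set
  let bOf : ((Fin n → Fin (m + 1)) × (Fin n → {x // x ∈ sX})) → ℕ → ℝ :=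
    fun p i => if h : i < n then ((p.1 ⟨i, h⟩ : ℕ) : ℝ) / m else 1
  let cOf : ((Fin n → Fin (m + 1)) × (Fin n → {x // x ∈ sX})) → ℕ → X :=
    fun p i => if h : i < n then (p.2 ⟨i, h⟩ : X) else x₀
  let valid : Finset ((Fin n → Fin (m + 1)) × (Fin n → {x // x ∈ sX})) :=
    Finset.univ.filter fun p =>
      (∀ i : Fin n, ∀ j : Fin n, i ≤ j → (p.1 i : ℕ) ≤ (p.1 j : ℕ)) ∧
        ((p.1 ⟨0, hn⟩ : ℕ) = 0)
  have hbOf_props : ∀ p ∈ valid,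
      bOf p 0 = 0 ∧ bOf p n = 1 ∧ ∀ i < n, bOf p i ≤ bOf p (i + 1) := by
    intro p hp
    rw [Finset.mem_filter] at hp
    obtain ⟨-, hmono, h0⟩ := hp
    refine ⟨?_, ?_, ?_⟩
    · simp only [bOf, dif_pos hn, h0, Nat.cast_zero, zero_div]
    · simp only [bOf, dif_neg (lt_irrefl n)]
    · intro i hi
      simp only [bOf, dif_pos hi]
      rcases Nat.lt_or_ge (i + 1) n with h2 | h2
      · rw [dif_pos h2]
        have hle : (p.1 ⟨i, hi⟩ : ℕ) ≤ (p.1 ⟨i + 1, h2⟩ : ℕ) :=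
          hmono ⟨i, hi⟩ ⟨i + 1, h2⟩ (by simp [Fin.le_def])
        gcongr
      · rw [dif_neg (not_lt.mpr h2)]
        rw [div_le_one hmpos]
        have : (p.1 ⟨i, hi⟩ : ℕ) ≤ m := Nat.lt_succ_iff.mp (p.1 ⟨i, hi⟩).2
        exact_mod_cast this
  refine ⟨valid.image fun p => stepFun n (bOf p) (cOf p), ?_, ?_⟩
  · intro g hg
    obtain ⟨p, hp, rfl⟩ := Finset.mem_image.mp hg
    obtain ⟨hb0, hb1, hbmono⟩ := hbOf_props p hp
    exact isStepN_stepFun _ hb0 hb1 hbmono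
  -- approximation
  intro f hf
  obtain ⟨a, ha0, ha1, hamono, hstep⟩ := hf
  have haM : ∀ i j, i ≤ j → j ≤ n → a i ≤ a j := mono_le_aux hamono
  have ha_nonneg : ∀ i ≤ n, 0 ≤ a i := fun i hi => ha0 ▸ haM 0 i (Nat.zero_le _) hi
  have ha_le_one : ∀ i ≤ n, a i ≤ 1 := fun i hi => ha1 ▸ haM i n hi le_rfl
  -- the grid data
  have hfloor_nonneg : ∀ i ≤ n, (0 : ℤ) ≤ ⌊(m : ℝ) * a i⌋ := fun i hi =>
    Int.floor_nonneg.mpr (mul_nonneg (le_of_lt hmpos) (ha_nonneg i hi))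
  have hfloor_le : ∀ i ≤ n, ⌊(m : ℝ) * a i⌋ ≤ (m : ℤ) := by
    intro i hi
    have h1 : ⌊(m : ℝ) * a i⌋ ≤ ⌊((m : ℤ) : ℝ)⌋ := by
      apply Int.floor_le_floor
      push_cast
      nlinarith [mul_le_mul_of_nonneg_left (ha_le_one i hi) (le_of_lt hmpos)]
    simpa using h1
  let k : Fin n → Fin (m + 1) := fun i =>
    ⟨(⌊(m : ℝ) * a i⌋).toNat, by
      rw [Nat.lt_succ_iff]
      exact_mod_cast Int.toNat_le.mpr (hfloor_le i (le_of_lt i.2))⟩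
  choose cc hccmem hccd using fun i : Fin n => hsX (f (a i))
  let p : (Fin n → Fin (m + 1)) × (Fin n → {x // x ∈ sX}) :=
    (k, fun i => ⟨cc i, hccmem i⟩)
  have hpvalid : p ∈ valid := by
    rw [Finset.mem_filter]
    refine ⟨Finset.mem_univ _, ?_, ?_⟩
    · intro i j hij
      show (⌊(m : ℝ) * a i⌋).toNat ≤ (⌊(m : ℝ) * a j⌋).toNat
      apply Int.toNat_le_toNat
      apply Int.floor_le_floor
      exact mul_le_mul_of_nonneg_left
        (haM i j hij (le_of_lt j.2)) (le_of_lt hmpos)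
    · show (⌊(m : ℝ) * a 0⌋).toNat = 0
      rw [ha0]
      norm_num
  -- properties of the grid points b
  obtain ⟨hb0, hb1, hbmono⟩ := hbOf_props p hpvalid
  set b : ℕ → ℝ := bOf p with hb
  have hb_eq : ∀ i < n, b i = (⌊(m : ℝ) * a i⌋ : ℝ) / m := by
    intro i hi
    show bOf p i = _
    simp only [bOf, dif_pos hi]
    congr 1
    have h2 := Int.toNat_of_nonneg (hfloor_nonneg i (le_of_lt hi))
    exact_mod_cast congrArg (fun z : ℤ => (z : ℝ)) h2
  have hb_le : ∀ i ≤ n, b i ≤ a i := by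
    intro i hi
    rcases Nat.lt_or_ge i n with h2 | h2
    · rw [hb_eq i h2, div_le_iff₀ hmpos, mul_comm]
      exact Int.floor_le _
    · have : i = n := le_antisymm hi h2
      rw [this, hb1, ha1]
  have hb_gt : ∀ i ≤ n, a i - 1 / m < b i := by
    intro i hi
    rcases Nat.lt_or_ge i n with h2 | h2
    · rw [hb_eq i h2, lt_div_iff₀ hmpos, sub_mul, div_mul_cancel₀ _ (ne_of_gt hmpos)]
      have := Int.sub_one_lt_floor ((m : ℝ) * a i)
      linarith [this]
    · have : i = n := le_antisymm hi h2
      rw [this, hb1, ha1]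
      have : 0 < 1 / (m : ℝ) := by positivity
      linarith
  set g : ℝ → X := stepFun n b (cOf p) with hg
  refine ⟨g, Finset.mem_image.mpr ⟨p, hpvalid, rfl⟩, ?_⟩
  -- the bad set and the dominating function
  set E : Set ℝ := ⋃ i ∈ Finset.range n, Set.Ico (a (i + 1) - 1 / m) (a (i + 1))
    with hE
  have hEmeas : MeasurableSet E :=
    (Finset.range n).measurableSet_biUnion fun i _ => measurableSet_Ico
  set h : ℝ → ℝ := fun t => ε' + E.indicator (fun _ => M) t with hh
  -- pointwise bound
  have hpt : ∀ t ∈ Set.Ico (0 : ℝ) 1, d (f t) (g t) ≤ h t := by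
    intro t ht
    set i : ℕ := Nat.findGreatest (fun j => a j ≤ t) (n - 1) with hi_def
    have hP0 : a 0 ≤ t := by rw [ha0]; exact ht.1
    have hai : a i ≤ t :=
      Nat.findGreatest_spec (P := fun j => a j ≤ t) (Nat.zero_le _) hP0
    have hin : i < n := Nat.lt_of_le_of_lt (Nat.findGreatest_le _)
      (Nat.pred_lt (Nat.pos_iff_ne_zero.mp hn))
    have hai1 : t < a (i + 1) := by
      rcases Nat.lt_or_ge (i + 1) n with h2 | h2
      · by_contra hc
        push_neg at hc
        exact Nat.findGreatest_is_greatest (Nat.lt_succ_self i)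
          (Nat.le_pred_of_lt h2) hc
      · have : i + 1 = n := le_antisymm hin h2
        rw [this, ha1]
        exact ht.2
    have hft : f t = f (a i) := hstep i hin t ⟨hai, hai1⟩
    rcases lt_or_ge t (b (i + 1)) with hcase | hcase
    · -- good region
      have hbi : b i ≤ t := le_trans (hb_le i (le_of_lt hin)) hai
      have hgt : g t = cOf p i := stepFun_eq (cOf p) hbmono hin hbi hcase
      have hcpi : cOf p i = cc ⟨i, hin⟩ := by
        simp only [cOf, dif_pos hin]; rfl
      have hd1 : d (f t) (g t) < ε' := by
        rw [hft, hgt, hcpi]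
        exact hccd ⟨i, hin⟩
      have : 0 ≤ E.indicator (fun _ => M) t :=
        Set.indicator_nonneg (fun _ _ => hM0) t
      rw [hh]
      dsimp only
      linarith
    · -- bad region : t ∈ E
      have htE : t ∈ E := by
        rw [hE]
        refine Set.mem_biUnion (Finset.mem_range.mpr hin) ?_
        refine ⟨?_, hai1⟩
        have := hb_gt (i + 1) hin
        linarith
      rw [hh]
      dsimp only
      rw [Set.indicator_of_mem htE]
      have : 0 < ε' := half_pos hε
      linarith [hdM (f t) (g t)]
  -- integrability of h
  have hconst_int : IntegrableOn (fun _ : ℝ => ε') (Set.Ico (0 : ℝ) 1) volume := by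
    exact integrableOn_const (by rw [Real.volume_Ico]; exact ENNReal.ofReal_ne_top) enorm_ne_top
  have hind_int : IntegrableOn (E.indicator fun _ => M) (Set.Ico (0 : ℝ) 1) volume :=
    (integrableOn_const (C := M) (s := Set.Ico (0 : ℝ) 1) (μ := volume)
      (by rw [Real.volume_Ico]; exact ENNReal.ofReal_ne_top) enorm_ne_top).indicator hEmeas
  have hh_int : IntegrableOn h (Set.Ico (0 : ℝ) 1) volume := hconst_int.add hind_int
  -- the comparison
  have hcomp : hm d f g ≤ ∫ t in Set.Ico (0 : ℝ) 1, h t := by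
    apply integral_mono_of_nonneg
    · exact Filter.Eventually.of_forall fun t => dpos _ _
    · exact hh_int
    · rw [Filter.EventuallyLE, ae_restrict_iff' measurableSet_Ico]
      exact Filter.Eventually.of_forall hpt
  -- compute / bound the integral of h
  have hvol1 : (volume (Set.Ico (0 : ℝ) 1)).toReal = 1 := by
    rw [Real.volume_Ico]
    norm_num
  have hEvol : ((volume.restrict (Set.Ico (0 : ℝ) 1)) E).toReal ≤ (n : ℝ) * (1 / m) := by
    have h1 : (volume.restrict (Set.Ico (0 : ℝ) 1)) E ≤
        (n : ENNReal) * ENNReal.ofReal (1 / m) := by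
      rw [Measure.restrict_apply hEmeas]
      calc volume (E ∩ Set.Ico (0 : ℝ) 1) ≤ volume E :=
            measure_mono Set.inter_subset_left
        _ ≤ ∑ i ∈ Finset.range n, volume (Set.Ico (a (i + 1) - 1 / m) (a (i + 1))) :=
            measure_biUnion_finset_le _ _
        _ = (n : ENNReal) * ENNReal.ofReal (1 / m) := by
            have : ∀ i ∈ Finset.range n,
                volume (Set.Ico (a (i + 1) - 1 / m) (a (i + 1))) =
                  ENNReal.ofReal (1 / m) := by
              intro i _
              rw [Real.volume_Ico]
              congr 1
              ring
            rw [Finset.sum_congr rfl this, Finset.sum_const, Finset.card_range,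
              nsmul_eq_mul]
    have h2 : (n : ENNReal) * ENNReal.ofReal (1 / m) ≠ ⊤ :=
      ENNReal.mul_ne_top (ENNReal.natCast_ne_top n) ENNReal.ofReal_ne_top
    calc ((volume.restrict (Set.Ico (0 : ℝ) 1)) E).toReal ≤
          ((n : ENNReal) * ENNReal.ofReal (1 / m)).toReal := ENNReal.toReal_mono h2 h1
      _ = (n : ℝ) * (1 / m) := by
          rw [ENNReal.toReal_mul, ENNReal.toReal_natCast,
            ENNReal.toReal_ofReal (by positivity)]
  have hint_h : ∫ t in Set.Ico (0 : ℝ) 1, h t ≤ ε' + (n : ℝ) * (1 / m) * M := by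
    rw [hh]
    rw [integral_add hconst_int hind_int]
    rw [setIntegral_const, integral_indicator_const M hEmeas]
    rw [measureReal_def, measureReal_def, hvol1, smul_eq_mul, smul_eq_mul, one_mul]
    have := mul_le_mul_of_nonneg_right hEvol hM0
    linarith
  calc hm d f g ≤ ∫ t in Set.Ico (0 : ℝ) 1, h t := hcomp
    _ ≤ ε' + (n : ℝ) * (1 / m) * M := hint_h
    _ < ε' + ε / 2 := by linarith [hkey]
    _ = ε := by rw [hε']; ring
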